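/- Let d ≥ 2 be an integer and let Γ be a finitely generated perfect abstract group such that every finite perfect group generated by d elements is a homomorphic image of Γ. Let G be a profinite group (a compact, Hausdorff, totally disconnected topological group) that is topologically generated by d elements and satisfies that the closure of [G,G] equals G. Then G contains a dense subgroup H which is finitely generated as an abstract group and perfect, i.e. H = [H,H]. -/

import Mathlib

open Function Set Pointwise

lemma aux_map_eq_top {G : Type*} [Group G] [TopologicalSpace G] [IsTopologicalGroup G]
    (N : Subgroup G) [N.Normal] (hN : IsOpen (N : Set G))
    (K : Subgroup G) (hK : Dense (K : Set G)) :
    Subgroup.map (QuotientGroup.mk' N) K = ⊤ := by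
  rw [eq_top_iff]
  rintro q -
  obtain ⟨x, rfl⟩ := QuotientGroup.mk'_surjective N q
  obtain ⟨k, hk1, hk2⟩ := hK.exists_mem_open (hN.smul x) ⟨x, by
    simpa using Set.smul_mem_smul_set (a := x) N.one_mem⟩
  refine ⟨k, hk1, ?_⟩
  obtain ⟨n, hn, rfl⟩ := hk2
  simp only [QuotientGroup.mk'_apply, smul_eq_mul]
  exact (QuotientGroup.eq.mpr (by simpa using hn)).symm

lemma aux_commutator_top_of_surj {A B : Type*} [Group A] [Group B] (f : A →* B)
    (hf : Surjective f) (h : commutator A = ⊤) : commutator B = ⊤ := by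
  rw [commutator_def] at h ⊢
  rw [← Subgroup.map_top_of_surjective f hf, ← Subgroup.map_commutator, h,
    Subgroup.map_top_of_surjective f hf]

theorem dense_fg_perfect_subgroup_of_perfect_profinite
    (d : ℕ) (hd : 2 ≤ d)
    (Γ : Type*) [Group Γ] (SΓ : Finset Γ)
    (hSΓ : Subgroup.closure (SΓ : Set Γ) = ⊤)
    (hΓperf : commutator Γ = ⊤)
    (hΓ : ∀ (K : Type) (_ : Group K) (_ : Finite K),
        commutator K = ⊤ →
        (∃ g : Fin d → K, Subgroup.closure (Set.range g) = ⊤) →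
        ∃ f : Γ →* K, Function.Surjective f)
    (G : Type*) [Group G] [TopologicalSpace G] [IsTopologicalGroup G]
    [CompactSpace G] [T2Space G] [TotallyDisconnectedSpace G]
    (g : Fin d → G)
    (hg : Dense ((Subgroup.closure (Set.range g) : Subgroup G) : Set G))
    (hGperf : closure ((commutator G : Subgroup G) : Set G) = Set.univ) :
    ∃ H : Subgroup G, Dense (H : Set G) ∧ H.FG ∧ ⁅H, H⁆ = H := by
  classical
  haveI : Nonempty (OpenNormalSubgroup G) := ⟨⟨⊤, by exact inferInstanceAs (⊤ : Subgroup G).Normal⟩⟩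
  have hNopen : ∀ N : OpenNormalSubgroup G, IsOpen (N.toSubgroup : Set G) :=
    fun N => N.toOpenSubgroup.isOpen
  -- the sets
  set C : OpenNormalSubgroup G → Set (Γ → G) := fun N =>
    {f | (∀ a b : Γ, (f a * f b)⁻¹ * f (a * b) ∈ N.toSubgroup) ∧
      Subgroup.closure ((fun x => QuotientGroup.mk' N.toSubgroup (f x)) '' (SΓ : Set Γ)) = ⊤}
    with hC
  -- closedness
  have hCclosed : ∀ N, IsClosed (C N) := by
    intro N
    have h1 : IsClosed {f : Γ → G | ∀ a b : Γ, (f a * f b)⁻¹ * f (a * b) ∈ N.toSubgroup} := by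
      rw [Set.setOf_forall]
      refine isClosed_iInter fun a => ?_
      rw [Set.setOf_forall]
      refine isClosed_iInter fun b => ?_
      have hcont : Continuous fun f : Γ → G => (f a * f b)⁻¹ * f (a * b) :=
        (((continuous_apply a).mul (continuous_apply b)).inv).mul (continuous_apply (a * b))
      exact (N.toOpenSubgroup.isClosed).preimage hcont
    have h2 : IsClosed {f : Γ → G |
        Subgroup.closure ((fun x => QuotientGroup.mk' N.toSubgroup (f x)) '' (SΓ : Set Γ)) = ⊤} := by
      rw [← isOpen_compl_iff, isOpen_iff_mem_nhds]
      intro f hf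
      have hUopen : IsOpen (⋂ s ∈ SΓ, (fun f' : Γ → G => f' s) ⁻¹' (f s • (N.toSubgroup : Set G))) := by
        refine isOpen_biInter_finset fun s _ => ?_
        exact ((hNopen N).smul (f s)).preimage (continuous_apply s)
      have hfU : f ∈ ⋂ s ∈ SΓ, (fun f' : Γ → G => f' s) ⁻¹' (f s • (N.toSubgroup : Set G)) := by
        refine Set.mem_iInter₂.mpr fun s _ => ?_
        exact ⟨1, N.toSubgroup.one_mem, mul_one _⟩
      refine Filter.mem_of_superset (hUopen.mem_nhds hfU) ?_
      intro f' hf'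
      have himg : ((fun x => QuotientGroup.mk' N.toSubgroup (f' x)) '' (SΓ : Set Γ)) =
          ((fun x => QuotientGroup.mk' N.toSubgroup (f x)) '' (SΓ : Set Γ)) := by
        refine Set.image_congr fun s hs => ?_
        have hm : f' s ∈ f s • (N.toSubgroup : Set G) := Set.mem_iInter₂.mp hf' s hs
        obtain ⟨n, hn, hmul⟩ := hm
        simp only [smul_eq_mul] at hmul
        simp only [QuotientGroup.mk'_apply]
        rw [← hmul]
        exact (QuotientGroup.eq.mpr (by simpa using hn)).symm
      intro hcl
      exact hf (by rw [Set.mem_setOf_eq, ← himg]; exact hcl)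
    simp only [hC]
    rw [Set.setOf_and]
    exact h1.inter h2
  -- nonemptiness
  have hCne : ∀ N, (C N).Nonempty := by
    intro N
    haveI : Finite (G ⧸ N.toSubgroup) := N.toSubgroup.quotient_finite_of_isOpen (hNopen N)
    have hmapg : Subgroup.closure
        (Set.range (fun i => QuotientGroup.mk' N.toSubgroup (g i))) = ⊤ := by
      have h := aux_map_eq_top N.toSubgroup (hNopen N) (Subgroup.closure (Set.range g)) hg
      rw [MonoidHom.map_closure] at h
      rw [← h]
      congr 1
      rw [← Set.range_comp]
      rfl
    have hqperf : commutator (G ⧸ N.toSubgroup) = ⊤ := by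
      rw [commutator_def, eq_top_iff]
      calc (⊤ : Subgroup (G ⧸ N.toSubgroup))
          = Subgroup.map (QuotientGroup.mk' N.toSubgroup) (commutator G) :=
            (aux_map_eq_top _ (hNopen N) _ (dense_iff_closure_eq.mpr hGperf)).symm
        _ ≤ ⁅(⊤ : Subgroup (G ⧸ N.toSubgroup)), ⊤⁆ := by
            rw [commutator_def, Subgroup.map_commutator]
            exact Subgroup.commutator_mono le_top le_top
    haveI : Small.{0} (G ⧸ N.toSubgroup) := by infer_instance
    set K₀ := Shrink.{0} (G ⧸ N.toSubgroup) with hK₀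
    let e : K₀ ≃* (G ⧸ N.toSubgroup) := Shrink.mulEquiv
    haveI : Finite K₀ := Finite.of_equiv _ e.symm.toEquiv
    have hK₀perf : commutator K₀ = ⊤ :=
      aux_commutator_top_of_surj e.symm.toMonoidHom e.symm.surjective hqperf
    have hK₀gen : ∃ g₀ : Fin d → K₀, Subgroup.closure (Set.range g₀) = ⊤ := by
      refine ⟨fun i => e.symm (QuotientGroup.mk' N.toSubgroup (g i)), ?_⟩
      have h := congrArg (Subgroup.map e.symm.toMonoidHom) hmapg
      rw [MonoidHom.map_closure, Subgroup.map_top_of_surjective _ e.symm.surjective] at h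
      rw [← h]
      congr 1
      rw [← Set.range_comp]
      rfl
    obtain ⟨f₀, hf₀⟩ := hΓ K₀ inferInstance inferInstance hK₀perf hK₀gen
    set φ : Γ →* G ⧸ N.toSubgroup := e.toMonoidHom.comp f₀ with hφdef
    have hφ : Surjective φ := e.surjective.comp hf₀
    choose f hf using fun γ => QuotientGroup.mk'_surjective N.toSubgroup (φ γ)
    refine ⟨f, fun a b => ?_, ?_⟩
    · have hq : QuotientGroup.mk' N.toSubgroup (f a * f b)
          = QuotientGroup.mk' N.toSubgroup (f (a * b)) := by
        rw [map_mul, hf, hf, hf, ← map_mul]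
      simpa using QuotientGroup.eq.mp hq
    · have himg : ((fun x => QuotientGroup.mk' N.toSubgroup (f x)) '' (SΓ : Set Γ))
          = φ '' (SΓ : Set Γ) := Set.image_congr fun s _ => hf s
      rw [himg, ← MonoidHom.map_closure, hSΓ, Subgroup.map_top_of_surjective _ hφ]
  -- directedness
  have hmono : ∀ (P Q : OpenNormalSubgroup G), P.toSubgroup ≤ Q.toSubgroup → C P ⊆ C Q := by
    intro P Q h f hfP
    obtain ⟨hf1, hf2⟩ := hfP
    constructor
    · exact fun a b => h (hf1 a b)
    · set q : G ⧸ P.toSubgroup →* G ⧸ Q.toSubgroup :=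
        QuotientGroup.map _ _ (MonoidHom.id G) (by simpa using h) with hqdef
      have hq : Surjective q := by
        intro y
        obtain ⟨x, rfl⟩ := QuotientGroup.mk_surjective y
        exact ⟨QuotientGroup.mk x, QuotientGroup.map_mk _ _ _ _ x⟩
      have h2 := congrArg (Subgroup.map q) hf2
      rw [MonoidHom.map_closure, Subgroup.map_top_of_surjective _ hq, Set.image_image] at h2
      exact h2
  have hdir : Directed (· ⊇ ·) C := fun N M =>
    ⟨N ⊓ M, hmono _ _ inf_le_left, hmono _ _ inf_le_right⟩
  -- the intersection of all open normal subgroups is trivial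
  have hconv : ∀ x : G, (∀ N : OpenNormalSubgroup G, x ∈ N.toSubgroup) → x = 1 := by
    intro x hx
    by_contra hne
    have h1 : ({x}ᶜ : Set G) ∈ nhds (1 : G) :=
      (isOpen_compl_singleton).mem_nhds (by simpa using Ne.symm hne)
    obtain ⟨W, ⟨hW1, hWc⟩, hWsub⟩ := (nhds_basis_clopen (1 : G)).mem_iff.mp h1
    obtain ⟨N, hN⟩ := IsTopologicalGroup.exist_openNormalSubgroup_sub_clopen_nhds_of_one hWc hW1
    exact hWsub (hN (hx N)) rfl
  -- extract a limit point
  obtain ⟨f, hfmem⟩ := IsCompact.nonempty_iInter_of_directed_nonempty_isCompact_isClosed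
    C hdir hCne (fun N => (hCclosed N).isCompact) hCclosed
  simp only [Set.mem_iInter] at hfmem
  have hmul : ∀ a b : Γ, f (a * b) = f a * f b := by
    intro a b
    have h := hconv _ (fun N => (hfmem N).1 a b)
    rw [inv_mul_eq_one] at h
    exact h.symm
  set F : Γ →* G := MonoidHom.mk' f hmul with hFdef
  refine ⟨Subgroup.closure (F '' (SΓ : Set Γ)), ?_, ?_, ?_⟩
  · -- dense
    rw [dense_iff_inter_open]
    intro U hU ⟨u, hu⟩
    obtain ⟨W, hWc, huW, hWU⟩ := compact_exists_isClopen_in_isOpen hU hu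
    have hWc' : IsClopen (u⁻¹ • W) := ⟨hWc.1.smul u⁻¹, hWc.2.smul u⁻¹⟩
    have h1W : (1 : G) ∈ u⁻¹ • W := ⟨u, huW, inv_mul_cancel u⟩
    obtain ⟨N, hN⟩ := IsTopologicalGroup.exist_openNormalSubgroup_sub_clopen_nhds_of_one hWc' h1W
    have hB := (hfmem N).2
    have hmapH : Subgroup.map (QuotientGroup.mk' N.toSubgroup)
        (Subgroup.closure (F '' (SΓ : Set Γ))) = ⊤ := by
      rw [MonoidHom.map_closure, Set.image_image]
      exact hB
    have hmem : QuotientGroup.mk' N.toSubgroup u ∈ Subgroup.map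
        (QuotientGroup.mk' N.toSubgroup) (Subgroup.closure (F '' (SΓ : Set Γ))) := by
      rw [hmapH]; trivial
    obtain ⟨h, hhH, hhq⟩ := hmem
    have hinN : u⁻¹ * h ∈ N.toSubgroup := QuotientGroup.eq.mp (hhq.symm)
    have hhW : h ∈ W := by
      obtain ⟨w, hw, hweq⟩ := hN hinN
      simp only [smul_eq_mul] at hweq
      rwa [mul_left_cancel hweq] at hw
    exact ⟨h, hWU hhW, hhH⟩
  · -- finitely generated
    exact (Subgroup.fg_iff _).mpr ⟨F '' (SΓ : Set Γ), rfl, SΓ.finite_toSet.image F⟩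
  · -- perfect
    have hmap : Subgroup.closure (F '' (SΓ : Set Γ)) = Subgroup.map F ⊤ := by
      rw [← hSΓ, MonoidHom.map_closure]
    rw [hmap, ← Subgroup.map_commutator, ← commutator_def, hΓperf]
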